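/- Suppose T ⊆ {1,…,N} has |T| = k and is optimal in the sense that α|λ_j|/(1 − αλ_j) ≥ α|λ_i|/(1 − αλ_i) for every j ∈ T and every i ∉ T. Then for every other subset T' ⊆ {1,…,N} with |T'| = k, both ‖Â_T − A‖₂ ≤ ‖Â_{T'} − A‖₂ and ‖Â_T − A‖_F ≤ ‖Â_{T'} − A‖_F hold; that is, T minimizes the spectral-norm and Frobenius-norm approximation errors of the transformation matrix over all size-k subsets of eigenpairs of S. -/

import Mathlib

open Matrix

/-- The ℓ2 operator norm (spectral norm) of a real matrix: its operator norm as a linear map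
between Euclidean spaces equipped with the ℓ2 norm. -/
noncomputable def l2OpNorm {N : ℕ} (M : Matrix (Fin N) (Fin N) ℝ) : ℝ :=
  ‖LinearMap.toContinuousLinearMap (Matrix.toEuclideanLin M)‖

/-- The Frobenius norm of a real matrix, `‖M‖_F = sqrt(∑_{a,b} M_{a,b}²)`. -/
noncomputable def frobNorm {N : ℕ} (M : Matrix (Fin N) (Fin N) ℝ) : ℝ :=
  Real.sqrt (∑ a, ∑ b, (M a b) ^ 2)

variable {N : ℕ} (Q : Matrix (Fin N) (Fin N) ℝ)

lemma my_conj_mul (hQ₁ : Qᵀ * Q = 1) (v w : Fin N → ℝ) :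
    (Q * diagonal v * Qᵀ) * (Q * diagonal w * Qᵀ) = Q * diagonal (v * w) * Qᵀ := by
  have h : (Q * diagonal v * Qᵀ) * (Q * diagonal w * Qᵀ)
      = Q * (diagonal v * ((Qᵀ * Q) * (diagonal w * Qᵀ))) := by
    simp only [Matrix.mul_assoc]
  rw [h, hQ₁, Matrix.one_mul, ← Matrix.mul_assoc (diagonal v), diagonal_mul_diagonal,
    Matrix.mul_assoc]
  rfl

lemma my_conj_one (hQ₂ : Q * Qᵀ = 1) : Q * diagonal (1 : Fin N → ℝ) * Qᵀ = 1 := by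
  rw [show (diagonal (1 : Fin N → ℝ)) = 1 from diagonal_one, Matrix.mul_one, hQ₂]

lemma my_conj_inv (hQ₁ : Qᵀ * Q = 1) (hQ₂ : Q * Qᵀ = 1) (v : Fin N → ℝ) (hv : ∀ i, v i ≠ 0) :
    (Q * diagonal v * Qᵀ)⁻¹ = Q * diagonal v⁻¹ * Qᵀ := by
  apply Matrix.inv_eq_right_inv
  rw [my_conj_mul Q hQ₁]
  have : v * v⁻¹ = 1 := by funext i; exact mul_inv_cancel₀ (hv i)
  rw [this, my_conj_one Q hQ₂]

lemma my_conj_sub (v w : Fin N → ℝ) :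
    (Q * diagonal v * Qᵀ) - (Q * diagonal w * Qᵀ) = Q * diagonal (v - w) * Qᵀ := by
  rw [← Matrix.sub_mul, ← Matrix.mul_sub, diagonal_sub]
  rfl

lemma my_conj_smul (a : ℝ) (v : Fin N → ℝ) :
    a • (Q * diagonal v * Qᵀ) = Q * diagonal (a • v) * Qᵀ := by
  rw [diagonal_smul, Matrix.mul_smul, Matrix.smul_mul]

lemma my_conj_apply (v : Fin N → ℝ) (a b : Fin N) :
    (Q * diagonal v * Qᵀ) a b = ∑ j, Q a j * v j * Q b j := by
  rw [Matrix.mul_apply]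
  simp [Matrix.mul_diagonal, Matrix.transpose_apply]

lemma my_conj_transpose (v : Fin N → ℝ) :
    (Q * diagonal v * Qᵀ)ᵀ = Q * diagonal v * Qᵀ := by
  simp [Matrix.transpose_mul, Matrix.diagonal_transpose, Matrix.mul_assoc]

lemma frob_conj (hQ₁ : Qᵀ * Q = 1) (v : Fin N → ℝ) :
    frobNorm (Q * diagonal v * Qᵀ) = Real.sqrt (∑ i, v i ^ 2) := by
  set M := Q * diagonal v * Qᵀ with hM
  have htr : trace (Mᵀ * M) = ∑ i, v i ^ 2 := by
    rw [my_conj_transpose, ← hM]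
    rw [hM, my_conj_mul Q hQ₁]
    rw [Matrix.mul_assoc, Matrix.trace_mul_comm, Matrix.mul_assoc, hQ₁, Matrix.mul_one,
      Matrix.trace_diagonal]
    simp [sq]
  have hsum : trace (Mᵀ * M) = ∑ b, ∑ a, M a b ^ 2 := by
    simp [Matrix.trace, Matrix.mul_apply, Matrix.diag, sq, Matrix.transpose_apply]
  rw [frobNorm, Finset.sum_comm, ← hsum, htr]

lemma sumsq_mulVec (hQ₁ : Qᵀ * Q = 1) (z : Fin N → ℝ) :
    ∑ a, (Q *ᵥ z) a ^ 2 = ∑ i, z i ^ 2 := by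
  have h : (Q *ᵥ z) ⬝ᵥ (Q *ᵥ z) = z ⬝ᵥ z := by
    rw [Matrix.dotProduct_mulVec]
    rw [show Q *ᵥ z = z ᵥ* Qᵀ from (Matrix.vecMul_transpose Q z).symm,
      Matrix.vecMul_vecMul, hQ₁, Matrix.vecMul_one]
  simpa [dotProduct, sq] using h

lemma euclid_norm (w : Fin N → ℝ) :
    ‖(WithLp.equiv 2 (Fin N → ℝ)).symm w‖ = Real.sqrt (∑ a, w a ^ 2) := by
  rw [EuclideanSpace.norm_eq]
  simp [Real.norm_eq_abs, sq_abs]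

lemma l2_le (hQ₁ : Qᵀ * Q = 1) (hQ₂ : Q * Qᵀ = 1) (v : Fin N → ℝ) (c : ℝ) (hc : 0 ≤ c)
    (h : ∀ i, |v i| ≤ c) : l2OpNorm (Q * diagonal v * Qᵀ) ≤ c := by
  apply ContinuousLinearMap.opNorm_le_bound _ hc
  intro x
  rw [LinearMap.coe_toContinuousLinearMap']
  set y : Fin N → ℝ := (WithLp.equiv 2 (Fin N → ℝ)) x with hy
  have hx : x = (WithLp.equiv 2 (Fin N → ℝ)).symm y := rfl
  have hxnorm : ‖x‖ = Real.sqrt (∑ a, y a ^ 2) := by rw [hx, euclid_norm]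
  change ‖(WithLp.equiv 2 (Fin N → ℝ)).symm ((Q * diagonal v * Qᵀ) *ᵥ y)‖ ≤ c * ‖x‖
  rw [euclid_norm, hxnorm]
  have hmv : (Q * diagonal v * Qᵀ) *ᵥ y = Q *ᵥ (diagonal v *ᵥ (Qᵀ *ᵥ y)) := by
    rw [Matrix.mulVec_mulVec, Matrix.mulVec_mulVec]
  rw [hmv, sumsq_mulVec Q hQ₁]
  set u : Fin N → ℝ := Qᵀ *ᵥ y with hu
  have h1 : ∑ i, (diagonal v *ᵥ u) i ^ 2 ≤ c ^ 2 * ∑ i, u i ^ 2 := by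
    rw [Finset.mul_sum]
    apply Finset.sum_le_sum
    intro i _
    rw [Matrix.mulVec_diagonal, mul_pow]
    have : v i ^ 2 ≤ c ^ 2 := by
      rw [← sq_abs (v i)]
      exact pow_le_pow_left₀ (abs_nonneg _) (h i) 2
    nlinarith [sq_nonneg (u i)]
  have h2 : ∑ i, u i ^ 2 = ∑ a, y a ^ 2 := by
    have := sumsq_mulVec Qᵀ (by rwa [Matrix.transpose_transpose]) y
    simpa [hu] using this
  calc Real.sqrt (∑ i, (diagonal v *ᵥ u) i ^ 2)
      ≤ Real.sqrt (c ^ 2 * ∑ a, y a ^ 2) := Real.sqrt_le_sqrt (by rw [← h2]; exact h1)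
    _ = c * Real.sqrt (∑ a, y a ^ 2) := by
        rw [Real.sqrt_mul (sq_nonneg c), Real.sqrt_sq hc]

lemma l2_ge (hQ₁ : Qᵀ * Q = 1) (v : Fin N → ℝ) (i : Fin N) :
    |v i| ≤ l2OpNorm (Q * diagonal v * Qᵀ) := by
  set x : EuclideanSpace ℝ (Fin N) := (WithLp.equiv 2 (Fin N → ℝ)).symm (fun a => Q a i)
  have hcol : ∑ a, Q a i ^ 2 = 1 := by
    have := congrFun (congrFun hQ₁ i) i
    simpa [Matrix.mul_apply, Matrix.one_apply, Matrix.transpose_apply, sq] using this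
  have hxn : ‖x‖ = 1 := by
    rw [euclid_norm, hcol, Real.sqrt_one]
  have hMQ : (Q * diagonal v * Qᵀ) * Q = Q * diagonal v := by
    rw [Matrix.mul_assoc, hQ₁, Matrix.mul_one]
  have hmv : (Q * diagonal v * Qᵀ) *ᵥ (fun a => Q a i) = fun a => Q a i * v i := by
    funext a
    have h0 : ((Q * diagonal v * Qᵀ) *ᵥ fun b => Q b i) a = ((Q * diagonal v * Qᵀ) * Q) a i := by
      simp [Matrix.mulVec, Matrix.mul_apply, dotProduct]
    rw [h0, hMQ, Matrix.mul_diagonal]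
  have hval : ‖(LinearMap.toContinuousLinearMap (Matrix.toEuclideanLin (Q * diagonal v * Qᵀ))) x‖
      = |v i| := by
    rw [LinearMap.coe_toContinuousLinearMap']
    rw [show Matrix.toEuclideanLin (Q * diagonal v * Qᵀ) x
        = (WithLp.equiv 2 (Fin N → ℝ)).symm ((Q * diagonal v * Qᵀ) *ᵥ (fun a => Q a i)) from rfl]
    rw [hmv, euclid_norm]
    have hs : ∑ a, (Q a i * v i) ^ 2 = v i ^ 2 := by
      rw [show ∑ a, (Q a i * v i) ^ 2 = (∑ a, Q a i ^ 2) * v i ^ 2 by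
        rw [Finset.sum_mul]; congr 1; funext a; ring, hcol, one_mul]
    rw [hs, Real.sqrt_sq_eq_abs]
  have := ContinuousLinearMap.le_opNorm
    (LinearMap.toContinuousLinearMap (Matrix.toEuclideanLin (Q * diagonal v * Qᵀ))) x
  rw [hval, hxn, mul_one] at this
  exact this

lemma diff_eq (hQ₁ : Qᵀ * Q = 1) (hQ₂ : Q * Qᵀ = 1) (α : ℝ) (lam : Fin N → ℝ)
    (hd : ∀ i, 1 - α * lam i ≠ 0) (U : Finset (Fin N)) :
    (1 - α • (∑ j ∈ U, lam j • Matrix.vecMulVec (fun a => Q a j) (fun a => Q a j)))⁻¹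
      - (1 - α • (Q * diagonal lam * Qᵀ))⁻¹
    = Q * diagonal
        (fun i => (if i ∈ U then 1 - α * lam i else 1)⁻¹ - (1 - α * lam i)⁻¹) * Qᵀ := by
  have hSU : (∑ j ∈ U, lam j • Matrix.vecMulVec (fun a => Q a j) (fun a => Q a j))
      = Q * diagonal (fun i => if i ∈ U then lam i else 0) * Qᵀ := by
    ext a b
    rw [my_conj_apply]
    have h0 : ∀ j, Q a j * (if j ∈ U then lam j else 0) * Q b j
        = if j ∈ U then lam j * (Q a j * Q b j) else 0 := by
      intro j; split <;> ring
    simp_rw [h0]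
    rw [Finset.sum_ite_mem, Finset.univ_inter]
    simp [Matrix.sum_apply, Matrix.vecMulVec_apply]
  have honeU : (1 : Matrix (Fin N) (Fin N) ℝ)
      - α • (∑ j ∈ U, lam j • Matrix.vecMulVec (fun a => Q a j) (fun a => Q a j))
      = Q * diagonal (fun i => if i ∈ U then 1 - α * lam i else 1) * Qᵀ := by
    have hfun : (1 : Fin N → ℝ) - α • (fun i => if i ∈ U then lam i else 0)
        = fun i => if i ∈ U then 1 - α * lam i else 1 := by
      funext i; by_cases h : i ∈ U <;> simp [h]
    rw [hSU, my_conj_smul, ← my_conj_one Q hQ₂, my_conj_sub, hfun]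
  have honeS : (1 : Matrix (Fin N) (Fin N) ℝ) - α • (Q * diagonal lam * Qᵀ)
      = Q * diagonal (fun i => 1 - α * lam i) * Qᵀ := by
    rw [my_conj_smul, ← my_conj_one Q hQ₂, my_conj_sub]
    rfl
  rw [honeU, honeS]
  rw [my_conj_inv Q hQ₁ hQ₂ _ (fun i => by by_cases h : i ∈ U <;> simp [h, hd i]),
    my_conj_inv Q hQ₁ hQ₂ _ hd, my_conj_sub]
  rfl

lemma sum_ite_compl {N : ℕ} (U : Finset (Fin N)) (f : Fin N → ℝ) :
    ∑ i, (if i ∈ U then 0 else f i) = ∑ i ∈ Uᶜ, f i := by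
  have h : ∀ i, (if i ∈ U then (0:ℝ) else f i) = if i ∈ Uᶜ then f i else 0 := by
    intro i; by_cases h : i ∈ U <;> simp [h]
  simp_rw [h]
  rw [Finset.sum_ite_mem, Finset.univ_inter]

lemma comb_key {N : ℕ} (f : Fin N → ℝ)
    (T T' : Finset (Fin N)) (hcard : T.card = T'.card)
    (hmono : ∀ j ∈ T, ∀ i ∉ T, f i ≤ f j) :
    ∑ i, (if i ∈ T then 0 else f i) ≤ ∑ i, (if i ∈ T' then 0 else f i) := by
  rw [sum_ite_compl, sum_ite_compl]
  rw [← Finset.sum_inter_add_sum_sdiff Tᶜ T'ᶜ f, ← Finset.sum_inter_add_sum_sdiff T'ᶜ Tᶜ f]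
  rw [Finset.inter_comm T'ᶜ Tᶜ]
  have h1 : Tᶜ \ T'ᶜ = T' \ T := by ext x; simp [Finset.mem_sdiff]; tauto
  have h2 : T'ᶜ \ Tᶜ = T \ T' := by ext x; simp [Finset.mem_sdiff]; tauto
  rw [h1, h2]
  apply add_le_add_right
  have hcc : (T' \ T).card = (T \ T').card := Finset.card_sdiff_comm hcard.symm
  have e := Finset.equivOfCardEq hcc
  rw [← Finset.sum_coe_sort (T' \ T) f, ← Finset.sum_coe_sort (T \ T') f]
  rw [← Equiv.sum_comp e (fun j => f (j : Fin N))]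
  apply Finset.sum_le_sum
  intro i _
  have hi : (i : Fin N) ∉ T := (Finset.mem_sdiff.mp i.2).2
  have hj : ((e i : {x // x ∈ T \ T'}) : Fin N) ∈ T := (Finset.mem_sdiff.mp (e i).2).1
  exact hmono _ hj _ hi


/-- **Optimality of the eigenvalue selection.** With `S = Q Λ Qᵀ` a spectral decomposition of
the real symmetric matrix `S` (eigenvalues in `[-1,1]`), `α ∈ (0,1)`,
`S_T = ∑_{j ∈ T} λ_j q_j q_jᵀ`, `A = (I - αS)⁻¹` and `Â_T = (I - αS_T)⁻¹`: if `|T| = k` and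
`α|λ_j|/(1-αλ_j) ≥ α|λ_i|/(1-αλ_i)` for all `j ∈ T`, `i ∉ T`, then for every other subset
`T'` of size `k` we have `‖Â_T - A‖₂ ≤ ‖Â_{T'} - A‖₂` and `‖Â_T - A‖_F ≤ ‖Â_{T'} - A‖_F`. -/
theorem stmt5 (N k : ℕ) (α : ℝ) (hα : α ∈ Set.Ioo (0 : ℝ) 1)
    (Q : Matrix (Fin N) (Fin N) ℝ) (hQ₁ : Qᵀ * Q = 1) (hQ₂ : Q * Qᵀ = 1)
    (lam : Fin N → ℝ) (hlam : ∀ i, lam i ∈ Set.Icc (-1 : ℝ) 1)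
    (S : Matrix (Fin N) (Fin N) ℝ) (hS : S = Q * Matrix.diagonal lam * Qᵀ)
    (T T' : Finset (Fin N)) (hT : T.card = k) (hT' : T'.card = k)
    (hopt : ∀ j ∈ T, ∀ i ∉ T,
      α * |lam i| / (1 - α * lam i) ≤ α * |lam j| / (1 - α * lam j))
    (ST ST' : Matrix (Fin N) (Fin N) ℝ)
    (hST : ST = ∑ j ∈ T, lam j • Matrix.vecMulVec (fun a => Q a j) (fun a => Q a j))
    (hST' : ST' = ∑ j ∈ T', lam j • Matrix.vecMulVec (fun a => Q a j) (fun a => Q a j))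
    (A Ahat Ahat' : Matrix (Fin N) (Fin N) ℝ)
    (hA : A = (1 - α • S)⁻¹)
    (hAhat : Ahat = (1 - α • ST)⁻¹) (hAhat' : Ahat' = (1 - α • ST')⁻¹) :
    l2OpNorm (Ahat - A) ≤ l2OpNorm (Ahat' - A) ∧
      frobNorm (Ahat - A) ≤ frobNorm (Ahat' - A) := by
  obtain ⟨hα0, hα1⟩ := hα
  subst hS hST hST' hA hAhat hAhat'
  have hdpos : ∀ i, 0 < 1 - α * lam i := by
    intro i
    have h1 := (hlam i).1
    have h2 := (hlam i).2
    nlinarith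
  have hdne : ∀ i, 1 - α * lam i ≠ 0 := fun i => (hdpos i).ne'
  rw [diff_eq Q hQ₁ hQ₂ α lam hdne T, diff_eq Q hQ₁ hQ₂ α lam hdne T']
  have habs : ∀ (U : Finset (Fin N)) i,
      |(if i ∈ U then 1 - α * lam i else 1)⁻¹ - (1 - α * lam i)⁻¹|
      = if i ∈ U then 0 else α * |lam i| / (1 - α * lam i) := by
    intro U i
    by_cases h : i ∈ U
    · simp [h]
    · rw [if_neg h, if_neg h, inv_one]
      have h1 : (1:ℝ) - (1 - α * lam i)⁻¹ = (-(α * lam i)) / (1 - α * lam i) := by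
        rw [eq_div_iff (hdne i), sub_mul, one_mul, inv_mul_cancel₀ (hdne i)]
        ring
      rw [h1, abs_div, abs_neg, abs_mul, abs_of_pos hα0, abs_of_pos (hdpos i)]
  have hcnn : ∀ i, 0 ≤ α * |lam i| / (1 - α * lam i) :=
    fun i => div_nonneg (mul_nonneg hα0.le (abs_nonneg _)) (hdpos i).le
  constructor
  · refine l2_le Q hQ₁ hQ₂ _ _ (norm_nonneg _) ?_
    intro i
    show |(if i ∈ T then 1 - α * lam i else 1)⁻¹ - (1 - α * lam i)⁻¹| ≤ _
    rw [habs T i]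
    by_cases h : i ∈ T
    · rw [if_pos h]; exact norm_nonneg _
    · rw [if_neg h]
      by_cases h' : i ∈ T'
      · have hcc : (T \ T').card = (T' \ T).card :=
          Finset.card_sdiff_comm (hT.trans hT'.symm)
        have hpos : 0 < (T \ T').card := by
          rw [hcc]
          exact Finset.card_pos.mpr ⟨i, Finset.mem_sdiff.mpr ⟨h', h⟩⟩
        obtain ⟨j, hj⟩ := Finset.card_pos.mp hpos
        obtain ⟨hjT, hjT'⟩ := Finset.mem_sdiff.mp hj
        have h1 : α * |lam i| / (1 - α * lam i) ≤ α * |lam j| / (1 - α * lam j) :=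
          hopt j hjT i h
        have h2 := l2_ge Q hQ₁
          (fun i => (if i ∈ T' then 1 - α * lam i else 1)⁻¹ - (1 - α * lam i)⁻¹) j
        rw [habs T' j, if_neg hjT'] at h2
        exact h1.trans h2
      · have h2 := l2_ge Q hQ₁
          (fun i => (if i ∈ T' then 1 - α * lam i else 1)⁻¹ - (1 - α * lam i)⁻¹) i
        rw [habs T' i, if_neg h'] at h2
        exact h2
  · rw [frob_conj Q hQ₁, frob_conj Q hQ₁]
    apply Real.sqrt_le_sqrt
    have hsq : ∀ (U : Finset (Fin N)) i,
        ((if i ∈ U then 1 - α * lam i else 1)⁻¹ - (1 - α * lam i)⁻¹) ^ 2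
        = if i ∈ U then 0 else (α * |lam i| / (1 - α * lam i)) ^ 2 := by
      intro U i
      rw [← sq_abs, habs U i]
      by_cases h : i ∈ U <;> simp [h]
    simp only [hsq]
    exact comb_key _ T T' (hT.trans hT'.symm)
      (fun j hj i hi => pow_le_pow_left₀ (hcnn i) (hopt j hj i hi) 2)
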